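/- Suppose an m×m nonnegative integer matrix M has all row sums and all column sums equal to t, and a family of t partial votes is constructed so that for each column j processed from highest to lowest, each vote's j-th position gets filled by a candidate c_i such that fewer than M[i][j] votes so far place c_i at position j. Then at every stage of this process, whenever some vote's j-th position is free, there exists a candidate c_i with strictly fewer than M[i][j] votes currently placing c_i at position j; and for any such c_i already placed elsewhere in the vote under consideration, there exists another vote that has not yet placed c_i at all. -/

import Mathlib

/-- Counting invariants in the construction of votes from a Filling Magic
Matrix solution.  `f z j` is the candidate placed by partial vote `z` at
position `j` (or `none`).  If the current placement counts respect `M`, then: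
(a) whenever some vote's position `j` is free there is a candidate `i` placed
at `j` fewer than `M i j` times; (b) if moreover `i` is already placed
somewhere in vote `z`, then some other vote has not placed `i` at all. -/
theorem fmm_construction_invariants (m t : ℕ)
    (M : Fin m → Fin m → ℕ)
    (hrow : ∀ i, ∑ j, M i j = t)
    (hcol : ∀ j, ∑ i, M i j = t)
    (f : Fin t → Fin m → Option (Fin m))
    (hinj : ∀ z j j', f z j ≠ none → f z j = f z j' → j = j')
    (hcnt : ∀ i j,
      (Finset.univ.filter (fun z : Fin t => f z j = some i)).card ≤ M i j) :
    (∀ j : Fin m, ∀ z : Fin t, f z j = none →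
      ∃ i : Fin m,
        (Finset.univ.filter (fun z' : Fin t => f z' j = some i)).card < M i j) ∧
    (∀ i j : Fin m, ∀ z : Fin t,
      (Finset.univ.filter (fun z' : Fin t => f z' j = some i)).card < M i j →
      (∃ j', f z j' = some i) →
      ∃ z' : Fin t, z' ≠ z ∧ ∀ j', f z' j' ≠ some i) := by
  constructor
  · intro j z hz
    by_contra h
    push_neg at h
    have hdisj : ∀ a ∈ (Finset.univ : Finset (Fin m)), ∀ b ∈ (Finset.univ : Finset (Fin m)),
        a ≠ b →
        Disjoint (Finset.univ.filter (fun z' : Fin t => f z' j = some a))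
          (Finset.univ.filter (fun z' : Fin t => f z' j = some b)) := by
      intro a _ b _ hab
      rw [Finset.disjoint_left]
      intro z' hza hzb
      simp only [Finset.mem_filter] at hza hzb
      exact hab (Option.some.inj (hza.2.symm.trans hzb.2))
    have hsum : ∑ i, (Finset.univ.filter (fun z' : Fin t => f z' j = some i)).card
        = ((Finset.univ : Finset (Fin m)).biUnion
            (fun i => Finset.univ.filter (fun z' : Fin t => f z' j = some i))).card :=
      (Finset.card_biUnion hdisj).symm
    have hsub : ((Finset.univ : Finset (Fin m)).biUnion
            (fun i => Finset.univ.filter (fun z' : Fin t => f z' j = some i)))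
        ⊆ Finset.univ.erase z := by
      intro z' hz'
      simp only [Finset.mem_biUnion, Finset.mem_filter] at hz'
      obtain ⟨i, _, _, hi⟩ := hz'
      refine Finset.mem_erase.mpr ⟨?_, Finset.mem_univ _⟩
      rintro rfl
      rw [hz] at hi
      exact Option.some_ne_none i hi.symm
    have hcard : ((Finset.univ : Finset (Fin m)).biUnion
            (fun i => Finset.univ.filter (fun z' : Fin t => f z' j = some i))).card ≤ t - 1 := by
      have := Finset.card_le_card hsub
      simpa [Finset.card_erase_of_mem] using this
    have ht : t ≤ t - 1 := by
      calc t = ∑ i, M i j := (hcol j).symm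
        _ ≤ ∑ i, (Finset.univ.filter (fun z' : Fin t => f z' j = some i)).card :=
            Finset.sum_le_sum (fun i _ => h i)
        _ ≤ t - 1 := hsum ▸ hcard
    have ht0 : 0 < t := z.pos
    omega
  · rintro i j z hlt ⟨j0, hj0⟩
    set S := Finset.univ.filter (fun z' : Fin t => ∃ j', f z' j' = some i) with hS
    have hScard : S.card < t := by
      have hsub : S ⊆ (Finset.univ : Finset (Fin m)).biUnion
          (fun j' => Finset.univ.filter (fun z' : Fin t => f z' j' = some i)) := by
        intro z' hz'
        rw [hS, Finset.mem_filter] at hz'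
        obtain ⟨_, j', hj'⟩ := hz'
        exact Finset.mem_biUnion.mpr ⟨j', Finset.mem_univ _,
          Finset.mem_filter.mpr ⟨Finset.mem_univ _, hj'⟩⟩
      calc S.card ≤ ∑ j', (Finset.univ.filter (fun z' : Fin t => f z' j' = some i)).card :=
            le_trans (Finset.card_le_card hsub) Finset.card_biUnion_le
        _ < ∑ j', M i j' := Finset.sum_lt_sum (fun j' _ => hcnt i j') ⟨j, Finset.mem_univ j, hlt⟩
        _ = t := hrow i
    have hne : ∃ z' : Fin t, z' ∉ S := by
      by_contra hall
      push_neg at hall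
      have : S = Finset.univ := Finset.eq_univ_iff_forall.mpr hall
      rw [this] at hScard
      simp at hScard
    obtain ⟨z', hz'⟩ := hne
    refine ⟨z', ?_, ?_⟩
    · rintro rfl
      exact hz' (Finset.mem_filter.mpr ⟨Finset.mem_univ _, ⟨j0, hj0⟩⟩)
    · intro j' hj'
      exact hz' (Finset.mem_filter.mpr ⟨Finset.mem_univ _, ⟨j', hj'⟩⟩)
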